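/- arXiv:2501.14075 — 2 statements merged into one kernel-verified Lean document; each statement's English description precedes it below -/
import Mathlib

section
/- Let x_1 ≤ ... ≤ x_n be real numbers with empirical CDF F_n, and define the L-estimator μ̂_{j:m} = ∑_{i=1}^{n} x_{i:n} (F_{B_{j:m}}(i/n) - F_{B_{j:m}}((i-1)/n)), where F_{B_{j:m}} is the Beta(j, m-j+1) CDF. Then (1/m) ∑_{j=1}^{m} μ̂_{j:m} equals the sample mean (1/n) ∑_{i=1}^{n} x_i. -/
open MeasureTheory Set

/-- Density of the Beta(j, m-j+1) distribution. -/
noncomputable def betaPDF (j m : ℕ) (p : ℝ) : ℝ :=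
  (m.factorial : ℝ) / ((j - 1).factorial * (m - j).factorial) * p ^ (j - 1) * (1 - p) ^ (m - j)

/-- CDF of the Beta(j, m-j+1) distribution. -/
noncomputable def betaCDF (j m : ℕ) (t : ℝ) : ℝ := ∫ p in (0:ℝ)..t, betaPDF j m p

/-- The L-estimator `μ̂_{j:m} = ∑_{i=1}^n x_{i:n} (F_{B_{j:m}}(i/n) - F_{B_{j:m}}((i-1)/n))`
computed from a sorted sample `x : Fin n → ℝ`. -/
noncomputable def Lest (n : ℕ) (x : Fin n → ℝ) (j m : ℕ) : ℝ :=
  ∑ i : Fin n, x i * (betaCDF j m (((i : ℕ) + 1) / n) - betaCDF j m ((i : ℕ) / n))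

lemma sum_betaPDF (m : ℕ) (hm : 1 ≤ m) (p : ℝ) :
    ∑ j ∈ Finset.Icc 1 m, betaPDF j m p = m := by
  rw [← Finset.Ico_add_one_right_eq_Icc, Finset.sum_Ico_eq_sum_range]
  have h1 : m + 1 - 1 = m := by omega
  rw [h1]
  have hterm : ∀ k ∈ Finset.range m, betaPDF (1 + k) m p
      = (m : ℝ) * ((m - 1).choose k : ℝ) * (p ^ k * (1 - p) ^ (m - 1 - k)) := by
    intro k hk
    have hk' : k ≤ m - 1 := by
      have := Finset.mem_range.mp hk; omega
    have hfac : m.factorial = m * ((m - 1).choose k * k.factorial * (m - 1 - k).factorial) := by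
      rw [Nat.choose_mul_factorial_mul_factorial hk']
      conv_lhs => rw [show m = (m - 1) + 1 from by omega]
      rw [Nat.factorial_succ]
      congr 1
      omega
    unfold betaPDF
    have e1 : 1 + k - 1 = k := by omega
    have e2 : m - (1 + k) = m - 1 - k := by omega
    rw [e1, e2, hfac]
    push_cast
    have hk0 : (k.factorial : ℝ) ≠ 0 := by positivity
    have hmk0 : ((m - 1 - k).factorial : ℝ) ≠ 0 := by positivity
    field_simp
  rw [Finset.sum_congr rfl hterm]
  have hb := add_pow p (1 - p) (m - 1)
  have hr : m - 1 + 1 = m := by omega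
  rw [show p + (1 - p) = 1 by ring, one_pow, hr] at hb
  calc ∑ k ∈ Finset.range m, (m : ℝ) * ((m - 1).choose k : ℝ) * (p ^ k * (1 - p) ^ (m - 1 - k))
      = (m : ℝ) * ∑ k ∈ Finset.range m, p ^ k * (1 - p) ^ (m - 1 - k) * ((m - 1).choose k : ℝ) := by
        rw [Finset.mul_sum]; apply Finset.sum_congr rfl; intro k _; ring
    _ = m := by rw [← hb, mul_one]

lemma betaPDF_continuous (j m : ℕ) : Continuous (betaPDF j m) := by
  unfold betaPDF
  fun_prop

lemma sum_betaCDF (m : ℕ) (hm : 1 ≤ m) (t : ℝ) :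
    ∑ j ∈ Finset.Icc 1 m, betaCDF j m t = m * t := by
  unfold betaCDF
  rw [← intervalIntegral.integral_finset_sum]
  · rw [intervalIntegral.integral_congr (g := fun _ => (m : ℝ))
      (fun p _ => sum_betaPDF m hm p)]
    simp [mul_comm]
  · intro j _
    exact (betaPDF_continuous j m).intervalIntegrable _ _

/-- The average over `j = 1,…,m` of the L-estimators `μ̂_{j:m}` equals the sample mean. -/
theorem stmt_8
    (n m : ℕ) (hn : 1 ≤ n) (hm : 1 ≤ m)
    (x : Fin n → ℝ) (hx : Monotone x) :
    (1 / (m : ℝ)) * ∑ j ∈ Finset.Icc 1 m, Lest n x j m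
      = (1 / (n : ℝ)) * ∑ i : Fin n, x i := by
  have hm0 : (m : ℝ) ≠ 0 := by positivity
  have hn0 : (n : ℝ) ≠ 0 := by
    have : 0 < n := hn
    positivity
  unfold Lest
  rw [Finset.sum_comm]
  have key : ∀ i : Fin n,
      ∑ j ∈ Finset.Icc 1 m, x i * (betaCDF j m (((i : ℕ) + 1) / n) - betaCDF j m ((i : ℕ) / n))
        = x i * (m / n) := by
    intro i
    rw [← Finset.mul_sum, Finset.sum_sub_distrib, sum_betaCDF m hm, sum_betaCDF m hm]
    congr 1
    field_simp
    ring
  rw [Finset.sum_congr rfl (fun i _ => key i), ← Finset.sum_mul]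
  field_simp
end

section
/- With the L-estimator μ̂_{j:m} as above computed from a fixed sample, one has μ̂_{j:m+1} ≤ μ̂_{j:m} for all 1 ≤ j ≤ m. -/
open MeasureTheory Set

lemma hasDerivAt_key (a b : ℕ) (p : ℝ) :
    HasDerivAt (fun t : ℝ => ((a+b+1).factorial : ℝ) / (a.factorial * (b+1).factorial)
        * (t ^ (a+1) * (1-t) ^ (b+1)))
      (betaPDF (a+1) (a+b+2) p - betaPDF (a+1) (a+b+1) p) p := by
  have h1 : HasDerivAt (fun t : ℝ => t ^ (a+1)) ((a+1) * p ^ a) p := by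
    simpa using hasDerivAt_pow (a+1) p
  have h2 : HasDerivAt (fun t : ℝ => (1-t) ^ (b+1)) (-((b+1) * (1-p) ^ b)) p := by
    have := (hasDerivAt_pow (b+1) (1-p)).comp p ((hasDerivAt_id p).const_sub 1)
    simpa [Function.comp_def] using this
  have h : HasDerivAt (fun t : ℝ => ((a+b+1).factorial : ℝ) / (a.factorial * (b+1).factorial)
        * (t ^ (a+1) * (1-t) ^ (b+1)))
      (((a+b+1).factorial : ℝ) / (a.factorial * (b+1).factorial)
        * ((a+1) * p ^ a * (1-p) ^ (b+1) + p ^ (a+1) * -((b+1) * (1-p) ^ b))) p := ((h1.mul h2).const_mul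
    (((a+b+1).factorial : ℝ) / (a.factorial * (b+1).factorial)))
  convert h using 1
  have e1 : (a+1) - 1 = a := by omega
  have e2 : (a+b+2) - (a+1) = b+1 := by omega
  have e3 : (a+b+1) - (a+1) = b := by omega
  simp only [betaPDF, e1, e2, e3]
  have fa : (a.factorial : ℝ) ≠ 0 := Nat.cast_ne_zero.2 a.factorial_ne_zero
  have fb : (b.factorial : ℝ) ≠ 0 := Nat.cast_ne_zero.2 b.factorial_ne_zero
  have fb1 : ((b+1).factorial : ℝ) ≠ 0 := Nat.cast_ne_zero.2 (b+1).factorial_ne_zero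
  have hab2 : ((a+b+2).factorial : ℝ) = (a+b+2) * (a+b+1).factorial := by
    rw [show a+b+2 = (a+b+1)+1 by ring, Nat.factorial_succ]; push_cast; ring
  have hbb : ((b+1).factorial : ℝ) = (b+1) * b.factorial := by
    rw [Nat.factorial_succ]; push_cast; ring
  rw [hab2, hbb]
  field_simp
  ring

lemma betaCDF_sub (a b : ℕ) (t : ℝ) :
    betaCDF (a+1) (a+b+2) t - betaCDF (a+1) (a+b+1) t
      = ((a+b+1).factorial : ℝ) / (a.factorial * (b+1).factorial)
          * (t ^ (a+1) * (1-t) ^ (b+1)) := by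
  have hint : ∀ j m : ℕ, IntervalIntegrable (betaPDF j m) volume 0 t :=
    fun j m => (betaPDF_continuous j m).intervalIntegrable _ _
  have := intervalIntegral.integral_eq_sub_of_hasDerivAt
    (f := fun t : ℝ => ((a+b+1).factorial : ℝ) / (a.factorial * (b+1).factorial)
        * (t ^ (a+1) * (1-t) ^ (b+1)))
    (f' := fun p => betaPDF (a+1) (a+b+2) p - betaPDF (a+1) (a+b+1) p)
    (a := 0) (b := t)
    (fun p _ => hasDerivAt_key a b p)
    (((betaPDF_continuous _ _).sub (betaPDF_continuous _ _)).intervalIntegrable _ _)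
  rw [intervalIntegral.integral_sub (hint _ _) (hint _ _)] at this
  unfold betaCDF
  rw [this]
  simp

lemma abel_nonneg (n : ℕ) (X : ℕ → ℝ) (hX : Monotone X) (d : ℕ → ℝ)
    (hd : ∀ i ≤ n, 0 ≤ d i) (h0 : d 0 = 0) (hn : d n = 0) :
    0 ≤ ∑ i ∈ Finset.range n, X i * (d i - d (i+1)) := by
  have hG : ∀ k, ∑ i ∈ Finset.range k, (d i - d (i+1)) = d 0 - d k :=
    fun k => Finset.sum_range_sub' d k
  have := Finset.sum_range_by_parts X (fun i => d i - d (i+1)) n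
  simp only [smul_eq_mul, hG] at this
  rw [this, h0, hn]
  have : ∀ i ∈ Finset.range (n-1), (X (i+1) - X i) * (0 - d (i+1)) ≤ 0 := by
    intro i hi
    have hi' : i + 1 ≤ n := by have := Finset.mem_range.1 hi; omega
    have h1 : 0 ≤ X (i+1) - X i := sub_nonneg.2 (hX (Nat.le_succ i))
    have h2 : 0 - d (i+1) ≤ 0 := by have := hd (i+1) hi'; linarith
    exact mul_nonpos_of_nonneg_of_nonpos h1 h2
  have hsum : ∑ i ∈ Finset.range (n-1), (X (i+1) - X i) * (0 - d (i+1)) ≤ 0 :=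
    Finset.sum_nonpos this
  linarith [hsum]

/-- Antitonicity of the L-estimator in `m`: `μ̂_{j:m+1} ≤ μ̂_{j:m}` for `1 ≤ j ≤ m`. -/
theorem stmt_11 (n m j : ℕ) (hn : 1 ≤ n) (hj : 1 ≤ j) (hjm : j ≤ m)
    (x : Fin n → ℝ) (hx : Monotone x) :
    Lest n x j (m + 1) ≤ Lest n x j m := by
  obtain ⟨a, rfl⟩ : ∃ a, j = a + 1 := ⟨j - 1, by omega⟩
  obtain ⟨b, rfl⟩ : ∃ b, m = a + b + 1 := ⟨m - (a + 1), by omega⟩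
  have hnR : (0:ℝ) < n := by exact_mod_cast hn
  set K : ℝ := ((a+b+1).factorial : ℝ) / (a.factorial * (b+1).factorial) with hK
  have hK0 : 0 ≤ K := by positivity
  set d : ℕ → ℝ := fun k => K * (((k:ℝ)/n) ^ (a+1) * (1 - (k:ℝ)/n) ^ (b+1)) with hd
  set X : ℕ → ℝ := fun i => x ⟨min i (n-1), by omega⟩ with hXdef
  have hXmono : Monotone X := by
    intro i k hik
    exact hx (by simp [Fin.mk_le_mk]; omega)
  have key : Lest n x (a+1) (a+b+1) - Lest n x (a+1) (a+b+1+1)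
      = ∑ i ∈ Finset.range n, X i * (d i - d (i+1)) := by
    unfold Lest
    rw [← Finset.sum_sub_distrib]
    rw [← Fin.sum_univ_eq_sum_range (fun i => X i * (d i - d (i+1))) n]
    apply Finset.sum_congr rfl
    intro i _
    have hXi : X (i : ℕ) = x i := by
      have : min (i : ℕ) (n-1) = (i : ℕ) := by omega
      simp only [hXdef, this]
    rw [hXi, ← mul_sub]
    congr 1
    have h1 := betaCDF_sub a b (((i:ℕ)+1)/n)
    have h2 := betaCDF_sub a b ((i:ℕ)/n)
    have e : a + b + 1 + 1 = a + b + 2 := by ring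
    rw [e]
    simp only [hd]
    push_cast
    linarith [h1, h2]
  have hnonneg : 0 ≤ ∑ i ∈ Finset.range n, X i * (d i - d (i+1)) := by
    apply abel_nonneg n X hXmono d
    · intro i hi
      have h1 : (0:ℝ) ≤ (i:ℝ)/n := by positivity
      have h2 : (i:ℝ)/n ≤ 1 := by
        rw [div_le_one hnR]; exact_mod_cast hi
      have : (0:ℝ) ≤ 1 - (i:ℝ)/n := by linarith
      simp only [hd]
      positivity
    · simp [hd]
    · simp only [hd]
      rw [div_self (ne_of_gt hnR)]
      simp
  linarith [key, hnonneg]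
end
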